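/- Let (S,d) be a complete separable metric space and let (μ_n)_{n ≥ 1} be a sequence of finite positive Borel measures on S such that the family {μ_n : n ≥ 1} is not uniformly tight. Then there exist ε > 0, a strictly increasing sequence (n_k) of positive integers and a sequence (K_{n_k}) of compact subsets of S such that μ_{n_k}(K_{n_k}) ≥ ε for all k ≥ 1 and dist(K_{n_k}, K_{n_m}) := inf{ d(x,y) : x ∈ K_{n_k}, y ∈ K_{n_m} } > ε for all k ≠ m. -/

import Mathlib

open MeasureTheory Filter Topology

section helpers
open MeasureTheory Filter Topology Metric Set ENNReal
variable {S : Type*} [MetricSpace S] [MeasurableSpace S] [BorelSpace S]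

lemma ball_exhaust [TopologicalSpace.SeparableSpace S]
    (ν : Measure S) [IsFiniteMeasure ν] {δ η : ℝ} (hδ : 0 < δ) (hη : 0 < η) :
    ∃ t : Set S, t.Finite ∧ ν ((⋃ x ∈ t, ball x δ)ᶜ) < ENNReal.ofReal η := by
  rcases isEmpty_or_nonempty S with hS | hS
  · refine ⟨∅, Set.finite_empty, ?_⟩
    have : ((⋃ x ∈ (∅ : Set S), ball x δ)ᶜ : Set S) = ∅ := Set.eq_empty_of_isEmpty _
    rw [this]
    simpa using ENNReal.ofReal_pos.2 hη
  · set u := TopologicalSpace.denseSeq S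
    have hu : DenseRange u := TopologicalSpace.denseRange_denseSeq S
    set G : ℕ → Set S := fun m => ⋃ i ∈ Finset.range m, ball (u i) δ with hG
    have hmeas : ∀ m, NullMeasurableSet ((G m)ᶜ) ν := by
      intro m
      exact (MeasurableSet.compl (isOpen_biUnion (fun i _ => isOpen_ball)).measurableSet).nullMeasurableSet
    have hanti : Antitone (fun m => (G m)ᶜ) := by
      intro a b hab
      exact Set.compl_subset_compl.2 (Set.biUnion_subset_biUnion_left (Finset.range_subset_range.2 hab))
    have hiInter : (⋂ m, (G m)ᶜ) = ∅ := by
      rw [← Set.compl_iUnion, Set.compl_empty_iff]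
      apply Set.eq_univ_of_forall
      intro x
      obtain ⟨i, hi⟩ := (Metric.denseRange_iff.1 hu) x δ hδ
      exact Set.mem_iUnion.2 ⟨i + 1, Set.mem_biUnion (Finset.self_mem_range_succ i) (by
        simpa [mem_ball, dist_comm] using hi)⟩
    have htend : Tendsto (fun m => ν ((G m)ᶜ)) atTop (𝓝 0) := by
      have := tendsto_measure_iInter_atTop (μ := ν) hmeas hanti ⟨0, measure_ne_top ν _⟩
      rw [hiInter] at this
      simpa [Function.comp_def] using this
    have : ∀ᶠ m in atTop, ν ((G m)ᶜ) < ENNReal.ofReal η :=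
      htend.eventually_lt_const (by simpa using ENNReal.ofReal_pos.2 hη)
    obtain ⟨m, hm⟩ := this.exists
    refine ⟨u '' (Set.Iio m), (Set.finite_Iio m).image u, lt_of_le_of_lt ?_ hm⟩
    apply measure_mono
    apply Set.compl_subset_compl.2
    intro x hx
    simp only [hG, Set.mem_iUnion, Finset.mem_range] at hx
    obtain ⟨i, him, hxi⟩ := hx
    exact Set.mem_biUnion ⟨i, him, rfl⟩ hxi

lemma aux_isCompact [CompleteSpace S] (t : ℕ → Set S) (ht : ∀ j, (t j).Finite) :
    IsCompact (⋂ j, closure (⋃ x ∈ t j, ball x (1 / (j + 1 : ℝ)))) := by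
  apply TotallyBounded.isCompact_of_isClosed
  · rw [Metric.totallyBounded_iff]
    intro ε hε
    obtain ⟨j, hj⟩ := exists_nat_one_div_lt hε
    refine ⟨t j, ht j, (Set.iInter_subset _ j).trans ?_⟩
    have h1 : closure (⋃ x ∈ t j, ball x (1 / (j + 1 : ℝ))) ⊆
        ⋃ x ∈ t j, closedBall x (1 / (j + 1 : ℝ)) := by
      apply closure_minimal (Set.iUnion₂_mono fun x _ => ball_subset_closedBall)
      exact (ht j).isClosed_biUnion fun x _ => Metric.isClosed_closedBall
    exact h1.trans (Set.iUnion₂_mono fun x _ => closedBall_subset_ball hj)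
  · exact isClosed_iInter fun j => isClosed_closure

lemma geom_sum_aux : (∑' j : ℕ, (2 : ℝ≥0∞)⁻¹ ^ (j + 2)) = 2⁻¹ := by
  have h1 : (∑' j : ℕ, (2 : ℝ≥0∞)⁻¹ ^ (j + 2)) = (∑' j : ℕ, (2 : ℝ≥0∞)⁻¹ ^ j) * 2⁻¹ ^ 2 := by
    rw [← ENNReal.tsum_mul_right]
    congr 1 with j
    rw [pow_add]
  rw [h1, ENNReal.tsum_geometric]
  have h2 : (1 : ℝ≥0∞) - 2⁻¹ = 2⁻¹ := by
    rw [ENNReal.sub_eq_of_eq_add (by simp)]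
    exact ENNReal.inv_two_add_inv_two.symm
  rw [h2, inv_inv]
  rw [sq, ← mul_assoc, ENNReal.mul_inv_cancel two_ne_zero ENNReal.ofNat_ne_top, one_mul]

lemma aux_small (ν : Measure S) {η : ℝ} (hη : 0 < η) (t : ℕ → Set S)
    (h : ∀ j, ν ((⋃ x ∈ t j, ball x (1 / (j + 1 : ℝ)))ᶜ) ≤ ENNReal.ofReal η * 2⁻¹ ^ (j + 2)) :
    ν ((⋂ j, closure (⋃ x ∈ t j, ball x (1 / (j + 1 : ℝ))))ᶜ) < ENNReal.ofReal η := by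
  have hsub : (⋂ j, closure (⋃ x ∈ t j, ball x (1 / (j + 1 : ℝ))))ᶜ ⊆
      ⋃ j, ((⋃ x ∈ t j, ball x (1 / (j + 1 : ℝ)))ᶜ) := by
    rw [Set.compl_iInter]
    exact Set.iUnion_mono fun j => Set.compl_subset_compl.2 subset_closure
  calc ν ((⋂ j, closure (⋃ x ∈ t j, ball x (1 / (j + 1 : ℝ))))ᶜ)
      ≤ ∑' j, ν ((⋃ x ∈ t j, ball x (1 / (j + 1 : ℝ)))ᶜ) :=
        (measure_mono hsub).trans (measure_iUnion_le _)
    _ ≤ ∑' j, ENNReal.ofReal η * 2⁻¹ ^ (j + 2) := ENNReal.tsum_le_tsum h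
    _ = ENNReal.ofReal η * 2⁻¹ := by rw [ENNReal.tsum_mul_left, geom_sum_aux]
    _ < ENNReal.ofReal η := by
        have h0 : ENNReal.ofReal η ≠ 0 := (ENNReal.ofReal_pos.2 hη).ne'
        have := ENNReal.half_lt_self h0 ENNReal.ofReal_ne_top
        rwa [ENNReal.div_eq_inv_mul, mul_comm] at this

lemma ofReal_mul_pow_eq {η : ℝ} (hη : 0 < η) (j : ℕ) :
    ENNReal.ofReal (η * (1/2) ^ (j + 2)) = ENNReal.ofReal η * 2⁻¹ ^ (j + 2) := by
  rw [ENNReal.ofReal_mul hη.le, ENNReal.ofReal_pow (by norm_num)]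
  congr 2
  rw [ENNReal.ofReal_div_of_pos (by norm_num), ENNReal.ofReal_one, ENNReal.ofReal_ofNat,
    one_div]

lemma tight [TopologicalSpace.SeparableSpace S] [CompleteSpace S]
    (ν : Measure S) [IsFiniteMeasure ν] {η : ℝ} (hη : 0 < η) :
    ∃ C : Set S, IsCompact C ∧ ν Cᶜ < ENNReal.ofReal η := by
  have h : ∀ j : ℕ, ∃ t : Set S, t.Finite ∧
      ν ((⋃ x ∈ t, ball x (1 / (j + 1 : ℝ)))ᶜ) < ENNReal.ofReal (η * (1/2) ^ (j + 2)) :=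
    fun j => ball_exhaust ν (by positivity) (by positivity)
  choose t htf hts using h
  refine ⟨⋂ j, closure (⋃ x ∈ t j, ball x (1 / (j + 1 : ℝ))), aux_isCompact t htf, ?_⟩
  apply aux_small ν hη t
  intro j
  exact le_of_lt (by rw [← ofReal_mul_pow_eq hη j]; exact hts j)

lemma exists_compact_lt_add [TopologicalSpace.SeparableSpace S] [CompleteSpace S]
    (ν : Measure S) [IsFiniteMeasure ν] {G : Set S} (hG : IsOpen G) {η : ℝ} (hη : 0 < η) :
    ∃ K, K ⊆ G ∧ IsCompact K ∧ ν G < ν K + ENNReal.ofReal η := by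
  have h2 : (ENNReal.ofReal (η/2)) ≠ 0 := (ENNReal.ofReal_pos.2 (by positivity)).ne'
  obtain ⟨F, hFG, hFcl, hF⟩ := hG.measurableSet.exists_isClosed_lt_add (measure_ne_top ν G) h2
  obtain ⟨C, hCc, hC⟩ := tight ν (show 0 < η/2 by positivity)
  refine ⟨F ∩ C, (Set.inter_subset_left).trans hFG, hCc.inter_left hFcl, ?_⟩
  have hsplit : ν F ≤ ν (F ∩ C) + ν Cᶜ := by
    calc ν F ≤ ν ((F ∩ C) ∪ Cᶜ) := measure_mono (fun x hx => by
      by_cases hxC : x ∈ C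
      · exact Or.inl ⟨hx, hxC⟩
      · exact Or.inr hxC)
    _ ≤ ν (F ∩ C) + ν Cᶜ := measure_union_le _ _
  calc ν G < ν F + ENNReal.ofReal (η/2) := hF
    _ ≤ (ν (F ∩ C) + ν Cᶜ) + ENNReal.ofReal (η/2) := by gcongr
    _ ≤ (ν (F ∩ C) + ENNReal.ofReal (η/2)) + ENNReal.ofReal (η/2) := add_le_add_left (add_le_add_right hC.le _) _
    _ = ν (F ∩ C) + (ENNReal.ofReal (η/2) + ENNReal.ofReal (η/2)) := by ring
    _ = ν (F ∩ C) + ENNReal.ofReal η := by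
        rw [← ENNReal.ofReal_add (by positivity) (by positivity)]
        norm_num

end helpers


/-- **Non-tight sequences of positive measures admit uniformly separated compact sets of
uniformly positive measure.** If `(μ_n)` is a sequence of finite positive Borel measures on a
complete separable metric space whose family is not uniformly tight, then there are `ε > 0`, a
strictly increasing sequence `(n_k)` and compact sets `(K_{n_k})` with `μ_{n_k}(K_{n_k}) ≥ ε`
for all `k` and `dist(K_{n_k}, K_{n_m}) > ε` for `k ≠ m`. -/
theorem separated_compacts_of_not_tight {S : Type*} [MetricSpace S] [CompleteSpace S]
    [TopologicalSpace.SeparableSpace S] [MeasurableSpace S] [BorelSpace S]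
    (μ : ℕ → Measure S) (hfin : ∀ n, IsFiniteMeasure (μ n))
    (hnt : ¬ ∀ ε : ℝ, 0 < ε → ∃ K : Set S, IsCompact K ∧ ∀ n, μ n Kᶜ < ENNReal.ofReal ε) :
    ∃ ε : ℝ, 0 < ε ∧ ∃ n : ℕ → ℕ, StrictMono n ∧ ∃ K : ℕ → Set S,
      (∀ k, IsCompact (K k)) ∧
      (∀ k, ENNReal.ofReal ε ≤ μ (n k) (K k)) ∧
      (∀ k m, k ≠ m → ∀ x ∈ K k, ∀ y ∈ K m, ε < dist x y) := by

  push_neg at hnt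
  obtain ⟨ε₀, hε₀, hbad⟩ := hnt
  have claim : ∃ δ : ℝ, 0 < δ ∧ ∃ η : ℝ, 0 < η ∧ ∀ t : Set S, t.Finite →
      ∃ n, ENNReal.ofReal η ≤ μ n ((⋃ x ∈ t, Metric.ball x δ)ᶜ) := by
    by_contra hcon
    push_neg at hcon
    have h : ∀ j : ℕ, ∃ t : Set S, t.Finite ∧ ∀ n,
        μ n ((⋃ x ∈ t, Metric.ball x (1/(j+1:ℝ)))ᶜ) < ENNReal.ofReal (ε₀ * (1/2)^(j+2)) :=
      fun j => hcon _ (by positivity) _ (by positivity)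
    choose t htf hts using h
    obtain ⟨n, hn⟩ := hbad _ (aux_isCompact t htf)
    have hsm := letI := hfin n; aux_small (μ n) hε₀ t (fun j =>
      le_of_lt (by rw [← ofReal_mul_pow_eq hε₀ j]; exact hts j n))
    exact absurd hn (not_le.2 hsm)
  obtain ⟨δ, hδ, η, hη, hclaim⟩ := claim
  have step : ∀ (N : ℕ) (U : Set S), IsCompact U → ∃ n, N < n ∧ ∃ K : Set S,
      IsCompact K ∧ ENNReal.ofReal (η/2) ≤ μ n K ∧ ∀ x ∈ K, ∀ u ∈ U, δ/4 < dist x u := by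
    intro N U hU
    obtain ⟨s, hsU, hsfin, hscov⟩ := hU.finite_cover_balls (show (0:ℝ) < δ/4 by positivity)
    have hex : ∀ m : ℕ, ∃ t : Set S, t.Finite ∧
        μ m ((⋃ x ∈ t, Metric.ball x δ)ᶜ) < ENNReal.ofReal η :=
      fun m => letI := hfin m; ball_exhaust (μ m) hδ hη
    choose t htf hts using hex
    set T : Set S := s ∪ ⋃ m ∈ Set.Iic N, t m with hT
    have hTfin : T.Finite := hsfin.union (Set.Finite.biUnion (Set.finite_Iic N) fun m _ => htf m)
    obtain ⟨n, hn⟩ := hclaim T hTfin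
    have hnN : N < n := by
      by_contra hle
      push_neg at hle
      have hsub : (⋃ x ∈ T, Metric.ball x δ)ᶜ ⊆ (⋃ x ∈ t n, Metric.ball x δ)ᶜ := by
        apply Set.compl_subset_compl.2
        apply Set.biUnion_subset_biUnion_left
        exact fun x hx => Or.inr (Set.mem_biUnion hle hx)
      exact absurd (hn.trans (measure_mono hsub)) (not_le.2 (hts n))
    set G : Set S := (⋃ y ∈ s, Metric.closedBall y (δ/2))ᶜ with hGdef
    have hGopen : IsOpen G := (hsfin.isClosed_biUnion fun _ _ => Metric.isClosed_closedBall).isOpen_compl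
    have hηG : ENNReal.ofReal η ≤ μ n G := by
      refine hn.trans (measure_mono (Set.compl_subset_compl.2 ?_))
      refine Set.iUnion₂_subset fun y hy => ?_
      refine (Metric.closedBall_subset_ball (show δ/2 < δ by linarith)).trans ?_
      exact Set.subset_biUnion_of_mem (u := fun x => Metric.ball x δ) (show y ∈ T from Set.mem_union_left _ hy)
    obtain ⟨K, hKG, hKc, hKlt⟩ :=
      letI := hfin n; exists_compact_lt_add (μ n) hGopen (show 0 < η/2 by positivity)
    have hKge : ENNReal.ofReal (η/2) ≤ μ n K := by
      by_contra hlt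
      push_neg at hlt
      have hGlt : μ n G < ENNReal.ofReal η := by
        calc μ n G < μ n K + ENNReal.ofReal (η/2) := hKlt
        _ ≤ ENNReal.ofReal (η/2) + ENNReal.ofReal (η/2) := add_le_add_left hlt.le _
        _ = ENNReal.ofReal η := by
            rw [← ENNReal.ofReal_add (by positivity) (by positivity)]; norm_num
      exact absurd hηG (not_le.2 hGlt)
    refine ⟨n, hnN, K, hKc, hKge, ?_⟩
    intro x hx u hu
    obtain ⟨y, hy, huy⟩ := Set.mem_iUnion₂.1 (hscov hu)
    have hxy : δ/2 < dist x y := by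
      have hxG : x ∈ G := hKG hx
      rw [hGdef] at hxG
      simp only [Set.mem_compl_iff, Set.mem_iUnion, Metric.mem_closedBall, not_exists,
        not_le] at hxG
      exact hxG y hy
    have huy' : dist u y < δ/4 := Metric.mem_ball.1 huy
    have htri : dist x y ≤ dist x u + dist u y := dist_triangle x u y
    linarith
  choose! f hfgt g hgc hgm hgs using step
  set F : (ℕ × Set S × Set S) → (ℕ × Set S × Set S) :=
    fun p => (f p.1 p.2.2, g p.1 p.2.2, p.2.2 ∪ g p.1 p.2.2) with hF
  set seq : ℕ → ℕ × Set S × Set S := fun k => F^[k] (f 0 ∅, g 0 ∅, g 0 ∅) with hseq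
  have hsucc : ∀ k, seq (k+1) = F (seq k) := fun k => Function.iterate_succ_apply' F k _
  have hUc : ∀ k, IsCompact (seq k).2.2 := by
    intro k
    induction k with
    | zero => exact hgc 0 ∅ isCompact_empty
    | succ k ih => rw [hsucc k]; exact ih.union (hgc _ _ ih)
  have hKc : ∀ k, IsCompact (seq k).2.1 := by
    intro k
    cases k with
    | zero => exact hgc 0 ∅ isCompact_empty
    | succ k => rw [hsucc k]; exact hgc _ _ (hUc k)
  have hKm : ∀ k, ENNReal.ofReal (η/2) ≤ μ (seq k).1 (seq k).2.1 := by
    intro k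
    cases k with
    | zero => exact hgm 0 ∅ isCompact_empty
    | succ k => rw [hsucc k]; exact hgm _ _ (hUc k)
  have hmono : ∀ k, (seq k).1 < (seq (k+1)).1 := by
    intro k
    rw [hsucc k]
    exact hfgt _ _ (hUc k)
  have hsep : ∀ k, ∀ x ∈ (seq (k+1)).2.1, ∀ u ∈ (seq k).2.2, δ/4 < dist x u := by
    intro k
    rw [hsucc k]
    exact hgs _ _ (hUc k)
  have hsubKU : ∀ k, (seq k).2.1 ⊆ (seq k).2.2 := by
    intro k
    cases k with
    | zero => exact subset_rfl
    | succ k => rw [hsucc k]; exact Set.subset_union_right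
  have hsubUU : ∀ k, (seq k).2.2 ⊆ (seq (k+1)).2.2 := by
    intro k; rw [hsucc k]; exact Set.subset_union_left
  have hincl : ∀ i k, i ≤ k → (seq i).2.1 ⊆ (seq k).2.2 := by
    intro i k hik
    induction k with
    | zero => rw [Nat.le_zero.1 hik]; exact hsubKU 0
    | succ k ih =>
      rcases eq_or_lt_of_le hik with h | h
      · rw [h]; exact hsubKU (k+1)
      · exact (ih (Nat.lt_succ_iff.1 h)).trans (hsubUU k)
  have hsep' : ∀ i k, i < k → ∀ x ∈ (seq k).2.1, ∀ u ∈ (seq i).2.1, δ/4 < dist x u := by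
    intro i k hik x hx u hu
    cases k with
    | zero => exact absurd hik (Nat.not_lt_zero i)
    | succ kk => exact hsep kk x hx u (hincl i kk (Nat.lt_succ_iff.1 hik) hu)
  refine ⟨min (δ/4) (η/2), lt_min (by positivity) (by positivity),
    fun k => (seq k).1, strictMono_nat_of_lt_succ hmono,
    fun k => (seq k).2.1, hKc, ?_, ?_⟩
  · intro k
    exact le_trans (ENNReal.ofReal_le_ofReal (min_le_right _ _)) (hKm k)
  · intro k m hkm x hx y hy
    rcases lt_or_gt_of_ne hkm with h | h
    · have := hsep' k m h y hy x hx
      rw [dist_comm] at this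
      exact lt_of_le_of_lt (min_le_left _ _) this
    · exact lt_of_le_of_lt (min_le_left _ _) (hsep' m k h x hx y hy)
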